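/- Let 0 ≤ m < 1, t₀ > 0 and K > 0 be fixed, and let f : (0,∞) → (0,∞) be continuous with ∫₀¹ r ln(1/r) f(r) dr < ∞. Define, for h > 0, B(h) = ∫₀^{2 sqrt((1+m)/(1−m)) t₀} ∫_{r sqrt(1−m²)}^{2(1+m)t₀} ∫₀^{π/2} 1_{η(θ) ≤ w/((1−m²) r)} · r f(r) ln(1 + K h^{1/2} / (w r η(θ)/(1−m²) − r² η(θ)²)) (ln(4(1+m)t₀) − ln w) dθ dw dr. Then B(h) → 0 as h → 0⁺. -/

import Mathlib

open MeasureTheory Set Filter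

/-- `η(θ) = sqrt(cos²θ/(1−m²)² + sin²θ/(1−m²))`. -/
noncomputable def eta (m θ : ℝ) : ℝ :=
  Real.sqrt (Real.cos θ ^ 2 / (1 - m ^ 2) ^ 2 + Real.sin θ ^ 2 / (1 - m ^ 2))

/-- The modulus-of-continuity bound of Lemma 5 of the paper:
`B(h) = ∫₀^{2√((1+m)/(1−m))t₀} ∫_{r√(1−m²)}^{2(1+m)t₀} ∫₀^{π/2} 1_{η(θ) ≤ w/((1−m²)r)}
  r f(r) ln(1 + K h^{1/2}/(w r η(θ)/(1−m²) − r² η(θ)²)) (ln(4(1+m)t₀) − ln w) dθ dw dr`. -/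
noncomputable def B (m t₀ K : ℝ) (f : ℝ → ℝ) (h : ℝ) : ENNReal :=
  ∫⁻ r in Ioo (0 : ℝ) (2 * Real.sqrt ((1 + m) / (1 - m)) * t₀),
    ∫⁻ w in Ioo (r * Real.sqrt (1 - m ^ 2)) (2 * (1 + m) * t₀),
      ∫⁻ θ in Ioo (0 : ℝ) (Real.pi / 2),
        ENNReal.ofReal
          (if eta m θ ≤ w / ((1 - m ^ 2) * r) then
            r * f r *
              Real.log (1 + K * Real.sqrt h /
                (w * r * eta m θ / (1 - m ^ 2) - r ^ 2 * eta m θ ^ 2)) *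
              (Real.log (4 * (1 + m) * t₀) - Real.log w)
          else 0)

section helpers
variable {m : ℝ}

lemma c_pos (hm0 : 0 ≤ m) (hm1 : m < 1) : 0 < 1 - m ^ 2 := by nlinarith

lemma c_le_one (hm0 : 0 ≤ m) : 1 - m ^ 2 ≤ 1 := by nlinarith

lemma one_le_eta (hm0 : 0 ≤ m) (hm1 : m < 1) (θ : ℝ) : 1 ≤ eta m θ := by
  have hc := c_pos hm0 hm1
  have hc1 := c_le_one hm0
  rw [eta, Real.one_le_sqrt]
  have h1 : Real.cos θ ^ 2 / (1 - m ^ 2) ≤ Real.cos θ ^ 2 / (1 - m ^ 2) ^ 2 :=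
    div_le_div_of_nonneg_left (sq_nonneg _) (by positivity) (by nlinarith)
  have h2 : Real.cos θ ^ 2 / (1 - m ^ 2) + Real.sin θ ^ 2 / (1 - m ^ 2) = 1 / (1 - m ^ 2) := by
    rw [← add_div, Real.cos_sq_add_sin_sq]
  have h3 : (1 : ℝ) ≤ 1 / (1 - m ^ 2) := one_le_one_div hc hc1
  linarith

lemma eta_le (hm0 : 0 ≤ m) (hm1 : m < 1) (θ : ℝ) : eta m θ ≤ 1 / (1 - m ^ 2) := by
  have hc := c_pos hm0 hm1
  have hc1 := c_le_one hm0
  have key : Real.cos θ ^ 2 / (1 - m ^ 2) ^ 2 + Real.sin θ ^ 2 / (1 - m ^ 2) ≤ (1 / (1 - m ^ 2)) ^ 2 := by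
    have h1 : Real.sin θ ^ 2 / (1 - m ^ 2) ≤ Real.sin θ ^ 2 / (1 - m ^ 2) ^ 2 :=
      div_le_div_of_nonneg_left (sq_nonneg _) (by positivity) (by nlinarith)
    have h2 : Real.cos θ ^ 2 / (1 - m ^ 2) ^ 2 + Real.sin θ ^ 2 / (1 - m ^ 2) ^ 2
        = (1 / (1 - m ^ 2)) ^ 2 := by
      rw [← add_div, Real.cos_sq_add_sin_sq]; field_simp
    linarith
  calc eta m θ ≤ Real.sqrt ((1 / (1 - m ^ 2)) ^ 2) := Real.sqrt_le_sqrt key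
  _ = 1 / (1 - m ^ 2) := Real.sqrt_sq (by positivity)

lemma continuous_eta (m : ℝ) : Continuous (eta m) := by
  unfold eta; fun_prop

/-- `log (1/u) ≤ 2 u^{-1/2}` for `u > 0`. -/
lemma log_inv_le_rpow {u : ℝ} (hu : 0 < u) : Real.log (1 / u) ≤ 2 * u ^ (-(2⁻¹ : ℝ)) := by
  have hv : 0 < u ^ ((2⁻¹ : ℝ)) := Real.rpow_pos_of_pos hu _
  have h1 : Real.log (1 / u) = 2 * Real.log (1 / u ^ ((2⁻¹ : ℝ))) := by
    rw [one_div, one_div, Real.log_inv, Real.log_inv, Real.log_rpow hu]; ring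
  have h2 : Real.log (1 / u ^ ((2⁻¹ : ℝ))) ≤ 1 / u ^ ((2⁻¹ : ℝ)) :=
    le_trans (Real.log_le_sub_one_of_pos (by positivity)) (by linarith)
  simp only [one_div] at h1 h2 ⊢
  rw [h1, Real.rpow_neg hu.le]
  linarith

/-- rpow of a nonpositive base with our exponents is nonpositive. -/
lemma rpow_nonpos_of_cos {x p : ℝ} (hx : x ≤ 0) (hp : p ≠ 0)
    (hcos : Real.cos (p * Real.pi) ≤ 0) : x ^ p ≤ 0 := by
  rcases lt_or_eq_of_le hx with h | h
  · rw [Real.rpow_def_of_neg h]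
    exact mul_nonpos_of_nonneg_of_nonpos (Real.exp_nonneg _) hcos
  · rw [h, Real.zero_rpow hp]

lemma cos_neg_half : Real.cos ((-(2⁻¹ : ℝ)) * Real.pi) ≤ 0 := by
  rw [show (-(2⁻¹ : ℝ)) * Real.pi = -(Real.pi / 2) by ring, Real.cos_neg, Real.cos_pi_div_two]

lemma cos_neg_three_quarter : Real.cos ((-(3 / 4 : ℝ)) * Real.pi) ≤ 0 := by
  rw [show (-(3 / 4 : ℝ)) * Real.pi = -(Real.pi - Real.pi / 4) by ring, Real.cos_neg,
    Real.cos_pi_sub]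
  have := Real.sqrt_nonneg 2
  rw [Real.cos_pi_div_four]; linarith

end helpers

section intlemmas
open MeasureTheory Set Filter

/-- Basic rpow integral bound on `Ioo a b`. -/
lemma Jlem {p : ℝ} (hp1 : -1 < p) (hp0 : p < 0) (hcos : Real.cos (p * Real.pi) ≤ 0)
    (a b : ℝ) :
    ∫⁻ v in Ioo a b, ENNReal.ofReal (2 * v ^ p) ≤
      ENNReal.ofReal (2 * (max b 0) ^ (p + 1) / (p + 1)) := by
  set b' := max b 0 with hb'
  have hb'0 : 0 ≤ b' := le_max_right _ _
  have hsub : Ioo a b ⊆ Iic 0 ∪ Ioo 0 b' := by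
    intro x hx
    rcases le_or_gt x 0 with h | h
    · exact Or.inl h
    · exact Or.inr ⟨h, lt_of_lt_of_le hx.2 (le_max_left _ _)⟩
  refine le_trans (lintegral_mono_set hsub) (le_trans (lintegral_union_le _ _ _) ?_)
  have hzero : ∫⁻ v in Iic (0:ℝ), ENNReal.ofReal (2 * v ^ p) = 0 := by
    rw [setLIntegral_congr_fun measurableSet_Iic
      (fun v (hv : v ≤ 0) => ?_), lintegral_zero]
    have : v ^ p ≤ 0 := rpow_nonpos_of_cos hv hp0.ne hcos
    rw [ENNReal.ofReal_eq_zero]; linarith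
  rw [hzero, zero_add]
  -- now compute on Ioo 0 b'
  have hint : IntegrableOn (fun v : ℝ => 2 * v ^ p) (Ioo 0 b') := by
    have h1 : IntervalIntegrable (fun v : ℝ => 2 * v ^ p) volume 0 b' :=
      (intervalIntegral.intervalIntegrable_rpow' hp1).const_mul 2
    have := (intervalIntegrable_iff).mp h1
    rw [uIoc_of_le hb'0] at this
    exact this.mono_set Ioo_subset_Ioc_self
  have hnn : 0 ≤ᵐ[volume.restrict (Ioo (0:ℝ) b')] (fun v : ℝ => 2 * v ^ p) := by
    filter_upwards [ae_restrict_mem measurableSet_Ioo] with v hv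
    have := Real.rpow_nonneg hv.1.le p
    positivity
  rw [← ofReal_integral_eq_lintegral_ofReal hint hnn]
  apply ENNReal.ofReal_le_ofReal
  have hval : ∫ v in Ioo (0:ℝ) b', 2 * v ^ p = 2 * (b' ^ (p + 1)) / (p + 1) := by
    rw [← integral_Ioc_eq_integral_Ioo, ← intervalIntegral.integral_of_le hb'0,
      intervalIntegral.integral_const_mul, integral_rpow (Or.inl hp1),
      Real.zero_rpow (by linarith : p + 1 ≠ 0)]
    ring
  rw [hval]

/-- Translated version: `∫_{Ioo α β} 2 (w-e)^p dw ≤ 2 β^{p+1}/(p+1)` for `0 ≤ β`. -/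
lemma Wlem {p : ℝ} (hp1 : -1 < p) (hp0 : p < 0) (hcos : Real.cos (p * Real.pi) ≤ 0)
    (e α β : ℝ) (he : 0 ≤ e) (hβ : 0 ≤ β) :
    ∫⁻ w in Ioo α β, ENNReal.ofReal (2 * (w - e) ^ p) ≤
      ENNReal.ofReal (2 * β ^ (p + 1) / (p + 1)) := by
  have htrans : ∫⁻ w in Ioo α β, ENNReal.ofReal (2 * (w - e) ^ p)
      = ∫⁻ v in Ioo (α - e) (β - e), ENNReal.ofReal (2 * v ^ p) := by
    rw [← lintegral_indicator measurableSet_Ioo, ← lintegral_indicator measurableSet_Ioo]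
    have : (fun w => (Ioo α β).indicator (fun w => ENNReal.ofReal (2 * (w - e) ^ p)) w)
        = fun w => (Ioo (α - e) (β - e)).indicator (fun v => ENNReal.ofReal (2 * v ^ p)) (w + -e) := by
      funext w
      by_cases hw : w ∈ Ioo α β
      · rw [indicator_of_mem hw, indicator_of_mem
          (by simp only [mem_Ioo]; constructor <;> linarith [hw.1, hw.2])]
        rw [sub_eq_add_neg]
      · rw [indicator_of_notMem hw, indicator_of_notMem (by
          simp only [mem_Ioo]; rintro ⟨hc1, hc2⟩; exact hw ⟨by linarith, by linarith⟩)]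
    rw [this, lintegral_add_right_eq_self (fun v => (Ioo (α - e) (β - e)).indicator (fun v => ENNReal.ofReal (2 * v ^ p)) v) (-e)]
  rw [htrans]
  refine le_trans (Jlem hp1 hp0 hcos _ _) (ENNReal.ofReal_le_ofReal ?_)
  have h1 : (max (β - e) 0) ^ (p + 1) ≤ β ^ (p + 1) :=
    Real.rpow_le_rpow (le_max_right _ _) (max_le (by linarith) hβ) (by linarith)
  have hp1' : 0 < p + 1 := by linarith
  exact (div_le_div_iff_of_pos_right hp1').mpr (by linarith)

end intlemmas

section pointwise
open MeasureTheory Set Filter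

lemma ofReal_rpow_div_le {p c w b : ℝ} (hp0 : p < 0) (hcos : Real.cos (p * Real.pi) ≤ 0)
    (hc : 0 < c) (hc1 : c ≤ 1) (hw : 0 < w) :
    ENNReal.ofReal (2 * (w / c - b) ^ p) ≤ ENNReal.ofReal (2 * (w - c * b) ^ p) := by
  rcases le_or_gt (w / c - b) 0 with hle | hpos
  · have h0 : (w / c - b) ^ p ≤ 0 := rpow_nonpos_of_cos hle hp0.ne hcos
    rw [show ENNReal.ofReal (2 * (w / c - b) ^ p) = 0 from
      ENNReal.ofReal_eq_zero.mpr (by linarith)]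
    exact zero_le
  · have hcu : w - c * b = c * (w / c - b) := by field_simp
    have hv : 0 < w - c * b := by rw [hcu]; positivity
    have hle2 : w - c * b ≤ w / c - b := by rw [hcu]; nlinarith
    have := Real.rpow_le_rpow_of_nonpos hv hle2 hp0.le
    exact ENNReal.ofReal_le_ofReal (by linarith)

/-- The constant `C₁`. -/
noncomputable def C1 (m t₀ K : ℝ) : ℝ :=
  Real.log ((2 * (1 + m) * t₀) * (2 * Real.sqrt ((1 + m) / (1 - m)) * t₀) / (1 - m ^ 2) ^ 2 + K)

/-- Key logarithm bound: under the indicator condition with positive `u`,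
`log(1 + K√h/D) ≤ (C₁ + log(1/r)) + log(1/u)`. -/
lemma key_log (m t₀ K : ℝ) (hm0 : 0 ≤ m) (hm1 : m < 1) (ht₀ : 0 < t₀) (hK : 0 < K)
    {h r w θ : ℝ} (hh : 0 < h) (hh1 : h ≤ 1) (hr : 0 < r)
    (hrR : r < 2 * Real.sqrt ((1 + m) / (1 - m)) * t₀)
    (hw2 : w < 2 * (1 + m) * t₀)
    (hu' : 0 < w / (1 - m ^ 2) - r * eta m θ) :
    Real.log (1 + K * Real.sqrt h /
        (w * r * eta m θ / (1 - m ^ 2) - r ^ 2 * eta m θ ^ 2))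
      ≤ (C1 m t₀ K + Real.log (1 / r)) + Real.log (1 / (w / (1 - m ^ 2) - r * eta m θ)) := by
  have hc : 0 < 1 - m ^ 2 := c_pos hm0 hm1
  have hη1 : 1 ≤ eta m θ := one_le_eta hm0 hm1 θ
  have hη0 : 0 < eta m θ := by linarith
  have hηle : eta m θ ≤ 1 / (1 - m ^ 2) := eta_le hm0 hm1 θ
  set η := eta m θ
  set u := w / (1 - m ^ 2) - r * η with hu
  have hD : w * r * η / (1 - m ^ 2) - r ^ 2 * η ^ 2 = r * η * u := by
    rw [hu]; field_simp
  have hDpos : 0 < r * η * u := by positivity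
  have hsh : 0 < Real.sqrt h := Real.sqrt_pos.mpr hh
  have hsh1 : Real.sqrt h ≤ 1 := Real.sqrt_le_one.mpr hh1
  rw [hD]
  have h1 : 1 + K * Real.sqrt h / (r * η * u) = (r * η * u + K * Real.sqrt h) / (r * η * u) := by
    field_simp
  rw [h1, Real.log_div (by positivity) (ne_of_gt hDpos)]
  have hw0 : 0 < w := by
    have h5 : 0 < w / (1 - m ^ 2) := by
      rw [hu] at hu'; linarith [mul_pos hr hη0]
    rcases div_pos_iff.mp h5 with h6 | h6
    · exact h6.1
    · linarith [h6.2]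
  have h2 : Real.log (r * η * u + K * Real.sqrt h) ≤ C1 m t₀ K := by
    apply Real.log_le_log (by positivity)
    have hηu : r * η * u ≤ w * r * η / (1 - m ^ 2) := by
      have : r * η * u = w * r * η / (1 - m ^ 2) - (r * η) ^ 2 := by rw [hu]; field_simp
      nlinarith [sq_nonneg (r * η)]
    have hR0 : 0 < 2 * Real.sqrt ((1 + m) / (1 - m)) * t₀ := lt_trans hr hrR
    have hwrη : w * r * η ≤ (2 * (1 + m) * t₀) * (2 * Real.sqrt ((1 + m) / (1 - m)) * t₀)
        * (1 / (1 - m ^ 2)) := by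
      apply mul_le_mul (mul_le_mul hw2.le hrR.le hr.le (by positivity)) hηle hη0.le
        (by positivity)
    have hfin : w * r * η / (1 - m ^ 2) ≤
        (2 * (1 + m) * t₀) * (2 * Real.sqrt ((1 + m) / (1 - m)) * t₀) / (1 - m ^ 2) ^ 2 := by
      have heq : (2 * (1 + m) * t₀) * (2 * Real.sqrt ((1 + m) / (1 - m)) * t₀) / (1 - m ^ 2) ^ 2
          = ((2 * (1 + m) * t₀) * (2 * Real.sqrt ((1 + m) / (1 - m)) * t₀) * (1 / (1 - m ^ 2)))
            / (1 - m ^ 2) := by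
        field_simp
      rw [heq]
      exact (div_le_div_iff_of_pos_right hc).mpr hwrη
    have hKh : K * Real.sqrt h ≤ K := by nlinarith
    linarith
  have h3 : Real.log (r * η * u) = Real.log r + Real.log η + Real.log u := by
    rw [Real.log_mul (by positivity) (ne_of_gt hu'), Real.log_mul (ne_of_gt hr) (ne_of_gt hη0)]
  have h4 : 0 ≤ Real.log η := Real.log_nonneg hη1
  rw [one_div, one_div, Real.log_inv, Real.log_inv]
  linarith

end pointwise

section ptlemmas
set_option maxHeartbeats 1000000
open MeasureTheory Set Filter

lemma pt1 (m t₀ K : ℝ) (f : ℝ → ℝ) (hm0 : 0 ≤ m) (hm1 : m < 1) (ht₀ : 0 < t₀) (hK : 0 < K)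
    {h r w : ℝ} (θ : ℝ) (hh : 0 < h) (hh1 : h ≤ 1) (hr : 0 < r)
    (hrR : r < 2 * Real.sqrt ((1 + m) / (1 - m)) * t₀) (hfr : 0 ≤ f r)
    (hw1 : r * Real.sqrt (1 - m ^ 2) < w) (hw2 : w < 2 * (1 + m) * t₀) :
    ENNReal.ofReal
      (if eta m θ ≤ w / ((1 - m ^ 2) * r) then
        r * f r * Real.log (1 + K * Real.sqrt h /
          (w * r * eta m θ / (1 - m ^ 2) - r ^ 2 * eta m θ ^ 2)) *
          (Real.log (4 * (1 + m) * t₀) - Real.log w)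
      else 0)
    ≤ ENNReal.ofReal (r * f r * max (C1 m t₀ K + Real.log (1 / r)) 0 *
        (Real.log (4 * (1 + m) * t₀) - Real.log w))
      + ENNReal.ofReal (r * f r * max 0 (Real.log (4 * (1 + m) * t₀)
          + Real.log (1 / (r * Real.sqrt (1 - m ^ 2)))))
        * ENNReal.ofReal (2 * (w - (1 - m ^ 2) * (r * eta m θ)) ^ (-(2⁻¹ : ℝ))) := by
  have hc : 0 < 1 - m ^ 2 := c_pos hm0 hm1
  have hc1 : 1 - m ^ 2 ≤ 1 := c_le_one hm0
  have hγ : 0 < Real.sqrt (1 - m ^ 2) := Real.sqrt_pos.mpr hc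
  have hη1 : 1 ≤ eta m θ := one_le_eta hm0 hm1 θ
  have hη0 : 0 < eta m θ := lt_of_lt_of_le one_pos hη1
  have hw0 : 0 < w := lt_trans (by positivity) hw1
  have hL : Real.log w < Real.log (4 * (1 + m) * t₀) :=
    Real.log_lt_log hw0 (by nlinarith)
  have hQ : 0 ≤ Real.log (4 * (1 + m) * t₀) - Real.log w := by linarith
  by_cases hcond : eta m θ ≤ w / ((1 - m ^ 2) * r)
  swap
  · rw [if_neg hcond, ENNReal.ofReal_zero]; exact zero_le
  rw [if_pos hcond]
  have hu0 : 0 ≤ w / (1 - m ^ 2) - r * eta m θ := by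
    have h6 : eta m θ * ((1 - m ^ 2) * r) ≤ w := (le_div_iff₀ (by positivity)).mp hcond
    rw [sub_nonneg, le_div_iff₀ hc]; nlinarith
  rcases hu0.eq_or_lt with hu0' | hu0'
  · have hD0 : w * r * eta m θ / (1 - m ^ 2) - r ^ 2 * eta m θ ^ 2 = 0 := by
      have heq : w * r * eta m θ / (1 - m ^ 2) - r ^ 2 * eta m θ ^ 2
          = r * eta m θ * (w / (1 - m ^ 2) - r * eta m θ) := by field_simp
      rw [heq, ← hu0', mul_zero]
    rw [hD0, div_zero, add_zero, Real.log_one, mul_zero, zero_mul, ENNReal.ofReal_zero]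
    exact zero_le
  · have hkey := key_log m t₀ K hm0 hm1 ht₀ hK hh hh1 hr hrR hw2 hu0'
    set L := Real.log (4 * (1 + m) * t₀) with hLdef
    set u := w / (1 - m ^ 2) - r * eta m θ with hu
    have hlog0 : 0 ≤ Real.log (1 + K * Real.sqrt h /
        (w * r * eta m θ / (1 - m ^ 2) - r ^ 2 * eta m θ ^ 2)) := by
      apply Real.log_nonneg
      have hD : w * r * eta m θ / (1 - m ^ 2) - r ^ 2 * eta m θ ^ 2 = r * eta m θ * u := by
        rw [hu]; field_simp
      rw [hD]
      have h9 : 0 ≤ K * Real.sqrt h / (r * eta m θ * u) := by positivity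
      linarith
    set A := Real.log (1 + K * Real.sqrt h /
        (w * r * eta m θ / (1 - m ^ 2) - r ^ 2 * eta m θ ^ 2)) with hA
    have hmaxC : A ≤ max (C1 m t₀ K + Real.log (1 / r)) 0 + Real.log (1 / u) :=
      le_trans hkey (add_le_add_left (le_max_left _ _) _)
    have hreal : r * f r * A * (L - Real.log w)
        ≤ r * f r * max (C1 m t₀ K + Real.log (1 / r)) 0 * (L - Real.log w)
          + r * f r * Real.log (1 / u) * (L - Real.log w) := by
      have h7 : r * f r * A
          ≤ r * f r * (max (C1 m t₀ K + Real.log (1 / r)) 0 + Real.log (1 / u)) :=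
        mul_le_mul_of_nonneg_left hmaxC (by positivity)
      nlinarith [mul_le_mul_of_nonneg_right h7 hQ]
    refine le_trans (ENNReal.ofReal_le_ofReal hreal) (le_trans ENNReal.ofReal_add_le ?_)
    refine add_le_add_right ?_ _
    have hZ : Real.log (1 / u) ≤ 2 * u ^ (-(2⁻¹ : ℝ)) := log_inv_le_rpow hu0'
    have hZ0 : (0:ℝ) ≤ 2 * u ^ (-(2⁻¹ : ℝ)) := by positivity
    have hQP : L - Real.log w ≤ max 0 (L + Real.log (1 / (r * Real.sqrt (1 - m ^ 2)))) := by
      have h8 : Real.log (r * Real.sqrt (1 - m ^ 2)) ≤ Real.log w :=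
        Real.log_le_log (by positivity) hw1.le
      rw [one_div, Real.log_inv]
      exact le_trans (by linarith) (le_max_right _ _)
    have hreal2 : r * f r * Real.log (1 / u) * (L - Real.log w)
        ≤ (r * f r * max 0 (L + Real.log (1 / (r * Real.sqrt (1 - m ^ 2)))))
          * (2 * u ^ (-(2⁻¹ : ℝ))) := by
      rcases le_or_gt (Real.log (1 / u)) 0 with hneg | hpos
      · have hle0 : r * f r * Real.log (1 / u) * (L - Real.log w) ≤ 0 :=
          mul_nonpos_of_nonpos_of_nonneg
            (mul_nonpos_of_nonneg_of_nonpos (by positivity) hneg) hQ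
        refine le_trans hle0 ?_
        have := le_max_left (0:ℝ) (L + Real.log (1 / (r * Real.sqrt (1 - m ^ 2))))
        positivity
      · have hP0 : (0:ℝ) ≤ max 0 (L + Real.log (1 / (r * Real.sqrt (1 - m ^ 2)))) :=
          le_max_left _ _
        calc r * f r * Real.log (1 / u) * (L - Real.log w)
            ≤ r * f r * Real.log (1 / u)
              * max 0 (L + Real.log (1 / (r * Real.sqrt (1 - m ^ 2)))) := by
              apply mul_le_mul_of_nonneg_left hQP
              have : (0:ℝ) ≤ r * f r := by positivity
              positivity
          _ ≤ r * f r * (2 * u ^ (-(2⁻¹ : ℝ)))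
              * max 0 (L + Real.log (1 / (r * Real.sqrt (1 - m ^ 2)))) := by
              apply mul_le_mul_of_nonneg_right _ hP0
              exact mul_le_mul_of_nonneg_left hZ (by positivity)
          _ = (r * f r * max 0 (L + Real.log (1 / (r * Real.sqrt (1 - m ^ 2)))))
              * (2 * u ^ (-(2⁻¹ : ℝ))) := by ring
    refine le_trans (ENNReal.ofReal_le_ofReal hreal2) ?_
    rw [ENNReal.ofReal_mul (by positivity :
      (0:ℝ) ≤ r * f r * max 0 (L + Real.log (1 / (r * Real.sqrt (1 - m ^ 2)))))]
    refine mul_le_mul_right ?_ _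
    have hdiv := ofReal_rpow_div_le (p := -(2⁻¹ : ℝ)) (by norm_num) cos_neg_half hc hc1 hw0
      (b := r * eta m θ)
    rw [hu]
    exact hdiv
end ptlemmas

section pt2sec
open MeasureTheory Set Filter
set_option maxHeartbeats 1000000

lemma pt2 (m t₀ K δ τ : ℝ) (f : ℝ → ℝ) (hm0 : 0 ≤ m) (hm1 : m < 1) (ht₀ : 0 < t₀) (hK : 0 < K)
    (hδ0 : 0 < δ) (hδ1 : δ ≤ 1) (hτ0 : 0 < τ) (hτe : τ ≤ Real.exp (-1))
    {h r w : ℝ} (θ : ℝ) (hh : 0 < h) (hh1 : h ≤ 1) (hδr : δ ≤ r)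
    (hrR : r < 2 * Real.sqrt ((1 + m) / (1 - m)) * t₀) (hfr : 0 ≤ f r)
    (hw1 : r * Real.sqrt (1 - m ^ 2) < w) (hw2 : w < 2 * (1 + m) * t₀) :
    ENNReal.ofReal
      (if eta m θ ≤ w / ((1 - m ^ 2) * r) then
        r * f r * Real.log (1 + K * Real.sqrt h /
          (w * r * eta m θ / (1 - m ^ 2) - r ^ 2 * eta m θ ^ 2)) *
          (Real.log (4 * (1 + m) * t₀) - Real.log w)
      else 0)
    ≤ ENNReal.ofReal (K * Real.sqrt h / (δ * τ) * (r * f r) *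
        (Real.log (4 * (1 + m) * t₀) - Real.log w))
      + ENNReal.ofReal (r * f r * ((max (C1 m t₀ K) 0 + Real.log (1 / δ) + 1)
          * max 0 (Real.log (4 * (1 + m) * t₀) + Real.log (1 / (δ * Real.sqrt (1 - m ^ 2))))
          * τ ^ ((4:ℝ)⁻¹)))
        * ENNReal.ofReal (2 * (w - (1 - m ^ 2) * (r * eta m θ)) ^ (-(3 / 4 : ℝ))) := by
  have hc : 0 < 1 - m ^ 2 := c_pos hm0 hm1
  have hc1 : 1 - m ^ 2 ≤ 1 := c_le_one hm0
  have hγ : 0 < Real.sqrt (1 - m ^ 2) := Real.sqrt_pos.mpr hc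
  have hγ1 : Real.sqrt (1 - m ^ 2) ≤ 1 := Real.sqrt_le_one.mpr hc1
  have hη1 : 1 ≤ eta m θ := one_le_eta hm0 hm1 θ
  have hη0 : 0 < eta m θ := lt_of_lt_of_le one_pos hη1
  have hr : 0 < r := lt_of_lt_of_le hδ0 hδr
  have hw0 : 0 < w := lt_trans (by positivity) hw1
  have hL : Real.log w < Real.log (4 * (1 + m) * t₀) :=
    Real.log_lt_log hw0 (by nlinarith)
  have hQ : 0 ≤ Real.log (4 * (1 + m) * t₀) - Real.log w := by linarith
  have hsh : 0 < Real.sqrt h := Real.sqrt_pos.mpr hh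
  by_cases hcond : eta m θ ≤ w / ((1 - m ^ 2) * r)
  swap
  · rw [if_neg hcond, ENNReal.ofReal_zero]; exact zero_le
  rw [if_pos hcond]
  have hu0 : 0 ≤ w / (1 - m ^ 2) - r * eta m θ := by
    have h6 : eta m θ * ((1 - m ^ 2) * r) ≤ w := (le_div_iff₀ (by positivity)).mp hcond
    rw [sub_nonneg, le_div_iff₀ hc]; nlinarith
  rcases hu0.eq_or_lt with hu0' | hu0'
  · have hD0 : w * r * eta m θ / (1 - m ^ 2) - r ^ 2 * eta m θ ^ 2 = 0 := by
      have heq : w * r * eta m θ / (1 - m ^ 2) - r ^ 2 * eta m θ ^ 2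
          = r * eta m θ * (w / (1 - m ^ 2) - r * eta m θ) := by field_simp
      rw [heq, ← hu0', mul_zero]
    rw [hD0, div_zero, add_zero, Real.log_one, mul_zero, zero_mul, ENNReal.ofReal_zero]
    exact zero_le
  set L := Real.log (4 * (1 + m) * t₀) with hLdef
  set u := w / (1 - m ^ 2) - r * eta m θ with hu
  have hD : w * r * eta m θ / (1 - m ^ 2) - r ^ 2 * eta m θ ^ 2 = r * eta m θ * u := by
    rw [hu]; field_simp
  rcases le_or_gt τ u with huτ | huτ
  · -- large u : use log(1+x) ≤ x ≤ K√h/(δτ)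
    have hDpos : 0 < r * eta m θ * u := by positivity
    have hx : 0 ≤ K * Real.sqrt h / (r * eta m θ * u) := by positivity
    have hlogle : Real.log (1 + K * Real.sqrt h /
        (w * r * eta m θ / (1 - m ^ 2) - r ^ 2 * eta m θ ^ 2))
        ≤ K * Real.sqrt h / (δ * τ) := by
      rw [hD]
      have h1x : (0:ℝ) < 1 + K * Real.sqrt h / (r * eta m θ * u) := by linarith
      refine le_trans (by linarith [Real.log_le_sub_one_of_pos h1x]) ?_
      apply div_le_div_of_nonneg_left (by positivity) (by positivity)
      nlinarith [mul_le_mul hδr huτ hτ0.le hr.le,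
        mul_le_mul_of_nonneg_right (mul_le_mul_of_nonneg_left hη1 hr.le) hu0'.le]
    have hlog0 : 0 ≤ Real.log (1 + K * Real.sqrt h /
        (w * r * eta m θ / (1 - m ^ 2) - r ^ 2 * eta m θ ^ 2)) := by
      apply Real.log_nonneg
      rw [hD]; linarith
    refine le_trans (le_trans (ENNReal.ofReal_le_ofReal ?_) (le_refl _)) (le_self_add)
    calc r * f r * Real.log (1 + K * Real.sqrt h /
          (w * r * eta m θ / (1 - m ^ 2) - r ^ 2 * eta m θ ^ 2)) * (L - Real.log w)
        ≤ r * f r * (K * Real.sqrt h / (δ * τ)) * (L - Real.log w) :=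
          mul_le_mul_of_nonneg_right
            (mul_le_mul_of_nonneg_left hlogle (by positivity)) hQ
      _ = K * Real.sqrt h / (δ * τ) * (r * f r) * (L - Real.log w) := by ring
  · -- small u
    have hkey := key_log m t₀ K hm0 hm1 ht₀ hK hh hh1 hr hrR hw2 hu0'
    have hlog1u : 1 ≤ Real.log (1 / u) := by
      rw [Real.le_log_iff_exp_le (by positivity)]
      have hue : u ≤ (Real.exp 1)⁻¹ := by
        rw [← Real.exp_neg]; linarith
      rw [le_div_iff₀ hu0']
      calc Real.exp 1 * u ≤ Real.exp 1 * (Real.exp 1)⁻¹ :=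
            mul_le_mul_of_nonneg_left hue (Real.exp_pos 1).le
        _ = 1 := mul_inv_cancel₀ (Real.exp_ne_zero 1)
    have hCδ0 : 0 ≤ max (C1 m t₀ K) 0 + Real.log (1 / δ) := by
      have : 0 ≤ Real.log (1 / δ) := Real.log_nonneg (one_le_one_div hδ0 hδ1)
      have h2 := le_max_right (C1 m t₀ K) 0
      linarith
    have hlogr : Real.log (1 / r) ≤ Real.log (1 / δ) := by
      apply Real.log_le_log (by positivity)
      exact one_div_le_one_div_of_le hδ0 hδr
    have hbig : Real.log (1 + K * Real.sqrt h /
        (w * r * eta m θ / (1 - m ^ 2) - r ^ 2 * eta m θ ^ 2))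
        ≤ (max (C1 m t₀ K) 0 + Real.log (1 / δ) + 1) * Real.log (1 / u) := by
      refine le_trans hkey ?_
      have h1 : C1 m t₀ K + Real.log (1 / r) ≤ max (C1 m t₀ K) 0 + Real.log (1 / δ) :=
        add_le_add (le_max_left _ _) hlogr
      nlinarith [hCδ0, hlog1u]
    have hZ : Real.log (1 / u) ≤ 2 * τ ^ ((4:ℝ)⁻¹) * u ^ (-(3 / 4 : ℝ)) := by
      have h1 : Real.log (1 / u) ≤ 2 * u ^ (-(2⁻¹ : ℝ)) := log_inv_le_rpow hu0'
      have h2 : u ^ (-(2⁻¹ : ℝ)) = u ^ ((4:ℝ)⁻¹) * u ^ (-(3 / 4 : ℝ)) := by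
        rw [← Real.rpow_add hu0']; norm_num
      have h3 : u ^ ((4:ℝ)⁻¹) ≤ τ ^ ((4:ℝ)⁻¹) :=
        Real.rpow_le_rpow hu0'.le huτ.le (by norm_num)
      have h4 : (0:ℝ) ≤ u ^ (-(3 / 4 : ℝ)) := Real.rpow_nonneg hu0'.le _
      calc Real.log (1 / u) ≤ 2 * u ^ (-(2⁻¹ : ℝ)) := h1
        _ = 2 * (u ^ ((4:ℝ)⁻¹) * u ^ (-(3 / 4 : ℝ))) := by rw [h2]
        _ ≤ 2 * (τ ^ ((4:ℝ)⁻¹) * u ^ (-(3 / 4 : ℝ))) := by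
            apply mul_le_mul_of_nonneg_left (mul_le_mul_of_nonneg_right h3 h4) (by norm_num)
        _ = 2 * τ ^ ((4:ℝ)⁻¹) * u ^ (-(3 / 4 : ℝ)) := by ring
    have hQP : L - Real.log w
        ≤ max 0 (L + Real.log (1 / (δ * Real.sqrt (1 - m ^ 2)))) := by
      have h8 : Real.log (δ * Real.sqrt (1 - m ^ 2)) ≤ Real.log w := by
        apply Real.log_le_log (by positivity)
        nlinarith [hγ, hδr, hw1]
      rw [one_div, Real.log_inv]
      exact le_trans (by linarith) (le_max_right _ _)
    have hP0 : (0:ℝ) ≤ max 0 (L + Real.log (1 / (δ * Real.sqrt (1 - m ^ 2)))) :=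
      le_max_left _ _
    set P := max 0 (L + Real.log (1 / (δ * Real.sqrt (1 - m ^ 2)))) with hP
    set Cδ := max (C1 m t₀ K) 0 + Real.log (1 / δ) with hCδ
    have hlogA0 : 0 ≤ (Cδ + 1) * Real.log (1 / u) :=
      mul_nonneg (by linarith) (by linarith)
    have hreal : r * f r * Real.log (1 + K * Real.sqrt h /
          (w * r * eta m θ / (1 - m ^ 2) - r ^ 2 * eta m θ ^ 2)) * (L - Real.log w)
        ≤ (r * f r * ((Cδ + 1) * P * τ ^ ((4:ℝ)⁻¹))) * (2 * u ^ (-(3 / 4 : ℝ))) := by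
      calc r * f r * Real.log (1 + K * Real.sqrt h /
            (w * r * eta m θ / (1 - m ^ 2) - r ^ 2 * eta m θ ^ 2)) * (L - Real.log w)
          ≤ r * f r * ((Cδ + 1) * Real.log (1 / u)) * (L - Real.log w) :=
            mul_le_mul_of_nonneg_right
              (mul_le_mul_of_nonneg_left hbig (by positivity)) hQ
        _ ≤ r * f r * ((Cδ + 1) * Real.log (1 / u)) * P :=
            mul_le_mul_of_nonneg_left hQP (by positivity)
        _ ≤ r * f r * ((Cδ + 1) * (2 * τ ^ ((4:ℝ)⁻¹) * u ^ (-(3 / 4 : ℝ)))) * P := by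
            apply mul_le_mul_of_nonneg_right _ hP0
            apply mul_le_mul_of_nonneg_left _ (by positivity)
            exact mul_le_mul_of_nonneg_left hZ (by linarith)
        _ = (r * f r * ((Cδ + 1) * P * τ ^ ((4:ℝ)⁻¹))) * (2 * u ^ (-(3 / 4 : ℝ))) := by ring
    refine le_trans (ENNReal.ofReal_le_ofReal hreal) (le_trans ?_ le_add_self)
    rw [ENNReal.ofReal_mul (by positivity :
      (0:ℝ) ≤ r * f r * ((Cδ + 1) * P * τ ^ ((4:ℝ)⁻¹)))]
    refine mul_le_mul_right ?_ _
    have hdiv := ofReal_rpow_div_le (p := -(3 / 4 : ℝ)) (by norm_num) cos_neg_three_quarter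
      hc hc1 hw0 (b := r * eta m θ)
    rw [hu]
    exact hdiv
end pt2sec

section innersec
open MeasureTheory Set Filter
set_option maxHeartbeats 1000000

lemma inner_le {γ W L : ℝ} (r : ℝ) (hγ : 0 < γ) (hr : 0 < r) (hW : 0 < W)
    (F : ℝ → ℝ → ENNReal) (k₁ k₂ : ℝ) (e : ℝ → ℝ) {p : ℝ}
    (hp1 : -1 < p) (hp0 : p < 0) (hcos : Real.cos (p * Real.pi) ≤ 0)
    (hk₁ : 0 ≤ k₁) (he : Measurable e) (he0 : ∀ θ, 0 ≤ e θ)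
    (hF : ∀ w ∈ Ioo (r * γ) W, ∀ θ : ℝ, F w θ ≤ ENNReal.ofReal (k₁ * (L - Real.log w))
      + ENNReal.ofReal k₂ * ENNReal.ofReal (2 * (w - e θ) ^ p)) :
    ∫⁻ w in Ioo (r * γ) W, ∫⁻ θ in Ioo 0 (Real.pi / 2), F w θ
      ≤ ENNReal.ofReal (Real.pi / 2) *
        (ENNReal.ofReal k₁ * (ENNReal.ofReal (max L 0 * W)
            + ENNReal.ofReal (2 * W ^ (-(2⁻¹:ℝ) + 1) / (-(2⁻¹:ℝ) + 1)))
         + ENNReal.ofReal k₂ * ENNReal.ofReal (2 * W ^ (p + 1) / (p + 1))) := by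
  have hgmeas : Measurable (Function.uncurry
      (fun w θ : ℝ => ENNReal.ofReal (2 * (w - e θ) ^ p))) := by
    have h1 : Measurable (fun q : ℝ × ℝ => q.1 - e q.2) :=
      measurable_fst.sub (he.comp measurable_snd)
    have h2 : Measurable (fun q : ℝ × ℝ => 2 * (q.1 - e q.2) ^ p) := by fun_prop
    exact h2.ennreal_ofReal
  have step1 : ∫⁻ w in Ioo (r * γ) W, ∫⁻ θ in Ioo 0 (Real.pi / 2), F w θ
      ≤ ∫⁻ w in Ioo (r * γ) W, (ENNReal.ofReal (k₁ * (L - Real.log w)) * ENNReal.ofReal (Real.pi / 2)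
          + ENNReal.ofReal k₂ * ∫⁻ θ in Ioo 0 (Real.pi / 2),
              ENNReal.ofReal (2 * (w - e θ) ^ p)) := by
    apply setLIntegral_mono' measurableSet_Ioo
    intro w hw
    calc ∫⁻ θ in Ioo 0 (Real.pi / 2), F w θ
        ≤ ∫⁻ θ in Ioo 0 (Real.pi / 2), (ENNReal.ofReal (k₁ * (L - Real.log w))
            + ENNReal.ofReal k₂ * ENNReal.ofReal (2 * (w - e θ) ^ p)) :=
          lintegral_mono (fun θ => hF w hw θ)
      _ = _ := by
          rw [lintegral_add_left measurable_const, setLIntegral_const,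
            lintegral_const_mul' _ _ ENNReal.ofReal_ne_top, Real.volume_Ioo, sub_zero]
  refine le_trans step1 ?_
  have hcmeas : Measurable (fun w : ℝ =>
      ENNReal.ofReal (k₁ * (L - Real.log w)) * ENNReal.ofReal (Real.pi / 2)) := by
    have h1 : Measurable (fun w : ℝ => k₁ * (L - Real.log w)) :=
      (measurable_const.sub Real.measurable_log).const_mul k₁
    exact h1.ennreal_ofReal.mul_const _
  rw [lintegral_add_left hcmeas]
  have piece1 : ∫⁻ w in Ioo (r * γ) W,
      ENNReal.ofReal (k₁ * (L - Real.log w)) * ENNReal.ofReal (Real.pi / 2)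
      ≤ (ENNReal.ofReal k₁ * (ENNReal.ofReal (max L 0 * W)
          + ENNReal.ofReal (2 * W ^ (-(2⁻¹:ℝ) + 1) / (-(2⁻¹:ℝ) + 1))))
        * ENNReal.ofReal (Real.pi / 2) := by
    rw [lintegral_mul_const' _ _ ENNReal.ofReal_ne_top]
    apply mul_le_mul_left
    have hpt : ∀ w ∈ Ioo (r * γ) W, ENNReal.ofReal (k₁ * (L - Real.log w))
        ≤ ENNReal.ofReal k₁ * (ENNReal.ofReal (max L 0)
            + ENNReal.ofReal (2 * w ^ (-(2⁻¹:ℝ)))) := by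
      intro w hw
      have hw0 : 0 < w := lt_trans (by positivity) hw.1
      have hlog : L - Real.log w ≤ max L 0 + 2 * w ^ (-(2⁻¹:ℝ)) := by
        have h1 := log_inv_le_rpow hw0
        rw [one_div, Real.log_inv] at h1
        have h2 := le_max_left L 0
        linarith
      rw [ENNReal.ofReal_mul hk₁]
      calc ENNReal.ofReal k₁ * ENNReal.ofReal (L - Real.log w)
          ≤ ENNReal.ofReal k₁ * ENNReal.ofReal (max L 0 + 2 * w ^ (-(2⁻¹:ℝ))) :=
            mul_le_mul_right (ENNReal.ofReal_le_ofReal hlog) _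
        _ ≤ _ := mul_le_mul_right ENNReal.ofReal_add_le _
    calc ∫⁻ w in Ioo (r * γ) W, ENNReal.ofReal (k₁ * (L - Real.log w))
        ≤ ∫⁻ w in Ioo (r * γ) W, ENNReal.ofReal k₁ * (ENNReal.ofReal (max L 0)
            + ENNReal.ofReal (2 * w ^ (-(2⁻¹:ℝ)))) :=
          setLIntegral_mono' measurableSet_Ioo hpt
      _ = ENNReal.ofReal k₁ * ∫⁻ w in Ioo (r * γ) W, (ENNReal.ofReal (max L 0)
            + ENNReal.ofReal (2 * w ^ (-(2⁻¹:ℝ)))) :=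
          lintegral_const_mul' _ _ ENNReal.ofReal_ne_top
      _ ≤ _ := by
          apply mul_le_mul_right
          rw [lintegral_add_left measurable_const, setLIntegral_const, Real.volume_Ioo]
          apply add_le_add
          · rw [← ENNReal.ofReal_mul (le_max_right L 0 : (0:ℝ) ≤ max L 0)]
            apply ENNReal.ofReal_le_ofReal
            have h3 : W - r * γ ≤ W := by nlinarith
            nlinarith [le_max_right L 0, le_max_left L 0]
          · have h4 := Jlem (p := -(2⁻¹:ℝ)) (by norm_num) (by norm_num) cos_neg_half (r*γ) W
            rw [max_eq_left hW.le] at h4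
            exact h4
  have piece2 : ∫⁻ w in Ioo (r * γ) W, ENNReal.ofReal k₂ *
        ∫⁻ θ in Ioo 0 (Real.pi / 2), ENNReal.ofReal (2 * (w - e θ) ^ p)
      ≤ ENNReal.ofReal k₂ * (ENNReal.ofReal (2 * W ^ (p + 1) / (p + 1))
          * ENNReal.ofReal (Real.pi / 2)) := by
    rw [lintegral_const_mul' _ _ ENNReal.ofReal_ne_top]
    apply mul_le_mul_right
    rw [lintegral_lintegral_swap hgmeas.aemeasurable]
    calc ∫⁻ θ in Ioo 0 (Real.pi / 2), ∫⁻ w in Ioo (r * γ) W,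
          ENNReal.ofReal (2 * (w - e θ) ^ p)
        ≤ ∫⁻ _θ in Ioo 0 (Real.pi / 2), ENNReal.ofReal (2 * W ^ (p + 1) / (p + 1)) :=
          setLIntegral_mono' measurableSet_Ioo
            (fun θ _ => Wlem hp1 hp0 hcos (e θ) (r * γ) W (he0 θ) hW.le)
      _ = _ := by rw [setLIntegral_const, Real.volume_Ioo, sub_zero]
  refine le_trans (add_le_add piece1 piece2) (le_of_eq ?_)
  ring
end innersec

section finsec
open MeasureTheory Set Filter
set_option maxHeartbeats 1000000

lemma fin_master (R a b : ℝ) (f : ℝ → ℝ) (hR : 0 < R) (ha : 0 ≤ a) (hb : 0 ≤ b)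
    (hf_cont : ContinuousOn f (Ioi 0)) (hf_pos : ∀ r > (0:ℝ), 0 < f r)
    (hf_int : (∫⁻ r in Ioo (0:ℝ) 1, ENNReal.ofReal (r * Real.log (1 / r) * f r)) < ⊤) :
    ∫⁻ r in Ioo (0:ℝ) R, ENNReal.ofReal (r * f r)
        * ENNReal.ofReal (a + b * max (Real.log (1 / r)) 0) < ⊤ := by
  set ρ := min R (Real.exp (-1)) with hρ
  have hρ0 : 0 < ρ := lt_min hR (Real.exp_pos _)
  have hρR : ρ ≤ R := min_le_left _ _
  have hρe : ρ ≤ Real.exp (-1) := min_le_right _ _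
  have hρ1 : ρ < 1 := lt_of_le_of_lt hρe (by
    rw [show (1:ℝ) = Real.exp 0 from (Real.exp_zero).symm]
    exact Real.exp_lt_exp.mpr (by norm_num))
  rw [← Ioo_union_Ico_eq_Ioo hρ0 hρR]
  refine lt_of_le_of_lt (lintegral_union_le _ _ _) ?_
  apply ENNReal.add_lt_top.mpr
  constructor
  · -- small r piece
    have hbound : ∀ r ∈ Ioo (0:ℝ) ρ, ENNReal.ofReal (r * f r)
        * ENNReal.ofReal (a + b * max (Real.log (1 / r)) 0)
        ≤ ENNReal.ofReal (a + b) * ENNReal.ofReal (r * Real.log (1 / r) * f r) := by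
      intro r hr
      have hr0 : 0 < r := hr.1
      have hfr : 0 < f r := hf_pos r hr0
      have hl1 : 1 ≤ Real.log (1 / r) := by
        rw [Real.le_log_iff_exp_le (by positivity), le_div_iff₀ hr0]
        have hre : r ≤ (Real.exp 1)⁻¹ := by
          rw [← Real.exp_neg]; linarith [hr.2]
        calc Real.exp 1 * r ≤ Real.exp 1 * (Real.exp 1)⁻¹ :=
              mul_le_mul_of_nonneg_left hre (Real.exp_pos 1).le
          _ = 1 := mul_inv_cancel₀ (Real.exp_ne_zero 1)
      have hmax : max (Real.log (1 / r)) 0 = Real.log (1 / r) := max_eq_left (by linarith)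
      rw [hmax, ← ENNReal.ofReal_mul (by positivity), ← ENNReal.ofReal_mul (by linarith)]
      apply ENNReal.ofReal_le_ofReal
      nlinarith [mul_nonneg (mul_nonneg ha (mul_pos hr0 hfr).le)
        (by linarith : (0:ℝ) ≤ Real.log (1 / r) - 1),
        mul_nonneg (mul_nonneg hb (mul_pos hr0 hfr).le)
        (by linarith : (0:ℝ) ≤ Real.log (1 / r) - 1)]
    calc ∫⁻ r in Ioo (0:ℝ) ρ, ENNReal.ofReal (r * f r)
          * ENNReal.ofReal (a + b * max (Real.log (1 / r)) 0)
        ≤ ∫⁻ r in Ioo (0:ℝ) ρ, ENNReal.ofReal (a + b)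
            * ENNReal.ofReal (r * Real.log (1 / r) * f r) :=
          setLIntegral_mono' measurableSet_Ioo hbound
      _ = ENNReal.ofReal (a + b) * ∫⁻ r in Ioo (0:ℝ) ρ,
            ENNReal.ofReal (r * Real.log (1 / r) * f r) :=
          lintegral_const_mul' _ _ ENNReal.ofReal_ne_top
      _ ≤ ENNReal.ofReal (a + b) * ∫⁻ r in Ioo (0:ℝ) 1,
            ENNReal.ofReal (r * Real.log (1 / r) * f r) :=
          mul_le_mul_right (lintegral_mono_set (Ioo_subset_Ioo le_rfl hρ1.le)) _
      _ < ⊤ := ENNReal.mul_lt_top ENNReal.ofReal_lt_top hf_int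
  · -- compact piece
    rcases (isCompact_Icc : IsCompact (Icc ρ R)).exists_bound_of_continuousOn
        (hf_cont.mono (fun x hx => lt_of_lt_of_le hρ0 hx.1)) with ⟨M, hM⟩
    have hpt : ∀ r ∈ Ico ρ R, ENNReal.ofReal (r * f r)
        * ENNReal.ofReal (a + b * max (Real.log (1 / r)) 0)
        ≤ ENNReal.ofReal (R * M) * ENNReal.ofReal (a + b * max (Real.log (1 / ρ)) 0) := by
      intro r hr
      have hr0 : 0 < r := lt_of_lt_of_le hρ0 hr.1
      have hfr : 0 ≤ f r := (hf_pos r hr0).le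
      have hfM : f r ≤ M := by
        have := hM r ⟨hr.1, hr.2.le⟩
        rw [Real.norm_eq_abs] at this
        exact le_trans (le_abs_self _) this
      have h1 : r * f r ≤ R * M := mul_le_mul hr.2.le hfM hfr (by linarith)
      have h2 : max (Real.log (1 / r)) 0 ≤ max (Real.log (1 / ρ)) 0 := by
        apply max_le_max _ le_rfl
        exact Real.log_le_log (by positivity) (one_div_le_one_div_of_le hρ0 hr.1)
      exact mul_le_mul' (ENNReal.ofReal_le_ofReal h1)
        (ENNReal.ofReal_le_ofReal (by nlinarith))
    calc ∫⁻ r in Ico ρ R, ENNReal.ofReal (r * f r)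
          * ENNReal.ofReal (a + b * max (Real.log (1 / r)) 0)
        ≤ ∫⁻ _r in Ico ρ R, ENNReal.ofReal (R * M)
            * ENNReal.ofReal (a + b * max (Real.log (1 / ρ)) 0) :=
          setLIntegral_mono' measurableSet_Ico hpt
      _ = ENNReal.ofReal (R * M) * ENNReal.ofReal (a + b * max (Real.log (1 / ρ)) 0)
            * volume (Ico ρ R) := setLIntegral_const _ _
      _ < ⊤ := by
          rw [Real.volume_Ico]
          exact ENNReal.mul_lt_top (ENNReal.mul_lt_top ENNReal.ofReal_lt_top
            ENNReal.ofReal_lt_top) ENNReal.ofReal_lt_top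
end finsec

section mainsec
open MeasureTheory Set Filter Topology
set_option maxHeartbeats 2000000

/-- Remark 2 of the paper: Let `0 ≤ m < 1`, `t₀ > 0` and `K > 0` be fixed,
and let `f : (0,∞) → (0,∞)` be continuous with `∫₀¹ r ln(1/r) f(r) dr < ∞`. Then
`B(h) → 0` as `h → 0⁺`. -/
theorem stmt_18 (m t₀ K : ℝ) (hm0 : 0 ≤ m) (hm1 : m < 1) (ht₀ : 0 < t₀) (hK : 0 < K)
    (f : ℝ → ℝ) (hf_cont : ContinuousOn f (Ioi 0)) (hf_pos : ∀ r > (0 : ℝ), 0 < f r)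
    (hf_int : (∫⁻ r in Ioo (0 : ℝ) 1, ENNReal.ofReal (r * Real.log (1 / r) * f r)) < ⊤) :
    Tendsto (B m t₀ K f) (nhdsWithin 0 (Ioi 0)) (nhds 0) := by
  have hc : 0 < 1 - m ^ 2 := c_pos hm0 hm1
  have hc1 : 1 - m ^ 2 ≤ 1 := c_le_one hm0
  have hγ : 0 < Real.sqrt (1 - m ^ 2) := Real.sqrt_pos.mpr hc
  have hγ1 : Real.sqrt (1 - m ^ 2) ≤ 1 := Real.sqrt_le_one.mpr hc1
  set R := 2 * Real.sqrt ((1 + m) / (1 - m)) * t₀ with hRdef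
  set W := 2 * (1 + m) * t₀ with hWdef
  set L := Real.log (4 * (1 + m) * t₀) with hLdef
  have hR : 0 < R := by
    have h1 : 0 < Real.sqrt ((1 + m) / (1 - m)) :=
      Real.sqrt_pos.mpr (div_pos (by linarith) (by linarith))
    rw [hRdef]; positivity
  have hW : 0 < W := by rw [hWdef]; nlinarith
  -- the E-constants
  set CW1 : ENNReal := ENNReal.ofReal (2 * W ^ (-(2⁻¹:ℝ) + 1) / (-(2⁻¹:ℝ) + 1)) with hCW1
  set CW2 : ENNReal := ENNReal.ofReal (2 * W ^ (-(3/4:ℝ) + 1) / (-(3/4:ℝ) + 1)) with hCW2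
  set E1 : ENNReal := ENNReal.ofReal (max L 0 * W) + CW1 with hE1
  -- the dominating function G
  set G : ℝ → ENNReal := fun r =>
    ENNReal.ofReal (Real.pi / 2) *
      (ENNReal.ofReal (r * f r * max (C1 m t₀ K + Real.log (1 / r)) 0) * E1
        + ENNReal.ofReal (r * f r
            * max 0 (L + Real.log (1 / (r * Real.sqrt (1 - m ^ 2))))) * CW1) with hGdef
  -- per-r bound by G, valid for all 0 < h ≤ 1
  have hG : ∀ (h : ℝ), 0 < h → h ≤ 1 → ∀ r ∈ Ioo (0:ℝ) R,
      (∫⁻ w in Ioo (r * Real.sqrt (1 - m ^ 2)) W, ∫⁻ θ in Ioo (0:ℝ) (Real.pi / 2),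
        ENNReal.ofReal (if eta m θ ≤ w / ((1 - m ^ 2) * r) then
          r * f r * Real.log (1 + K * Real.sqrt h /
            (w * r * eta m θ / (1 - m ^ 2) - r ^ 2 * eta m θ ^ 2)) * (L - Real.log w)
        else 0)) ≤ G r := by
    intro h hh hh1 r hr
    have hmeas : Measurable (fun θ : ℝ => (1 - m ^ 2) * (r * eta m θ)) :=
      (continuous_const.mul (continuous_const.mul (continuous_eta m))).measurable
    exact inner_le r hγ hr.1 hW _
      (r * f r * max (C1 m t₀ K + Real.log (1 / r)) 0)
      (r * f r * max 0 (L + Real.log (1 / (r * Real.sqrt (1 - m ^ 2)))))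
      (fun θ => (1 - m ^ 2) * (r * eta m θ))
      (by norm_num) (by norm_num) cos_neg_half
      (mul_nonneg (mul_nonneg hr.1.le (hf_pos r hr.1).le) (le_max_right _ 0))
      hmeas
      (fun θ => mul_nonneg hc.le (mul_nonneg hr.1.le
        (by linarith [one_le_eta hm0 hm1 θ])))
      (fun w hw θ => pt1 m t₀ K f hm0 hm1 ht₀ hK θ hh hh1 hr.1 hr.2
        (hf_pos r hr.1).le hw.1 hw.2)
  -- finiteness of ∫ G
  set a₀ : ℝ := max (C1 m t₀ K) 0 + (max L 0 + Real.log (1 / Real.sqrt (1 - m ^ 2))) with ha₀def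
  have hlogγ : 0 ≤ Real.log (1 / Real.sqrt (1 - m ^ 2)) :=
    Real.log_nonneg (one_le_one_div hγ hγ1)
  have ha₀ : 0 ≤ a₀ := by
    have h1 := le_max_right (C1 m t₀ K) 0
    have h2 := le_max_right L 0
    rw [ha₀def]; linarith
  have hGfin : (∫⁻ r in Ioo (0:ℝ) R, G r) < ⊤ := by
    have hptG : ∀ r ∈ Ioo (0:ℝ) R, G r ≤
        (ENNReal.ofReal (Real.pi / 2) * (E1 + CW1)) *
          (ENNReal.ofReal (r * f r)
            * ENNReal.ofReal (a₀ + 2 * max (Real.log (1 / r)) 0)) := by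
      intro r hr
      have hr0 : 0 < r := hr.1
      have hfr : 0 ≤ f r := (hf_pos r hr0).le
      have hrf : 0 ≤ r * f r := mul_nonneg hr0.le hfr
      set mA := max (C1 m t₀ K + Real.log (1 / r)) 0 with hmA
      set mP := max 0 (L + Real.log (1 / (r * Real.sqrt (1 - m ^ 2)))) with hmP
      set ml := max (Real.log (1 / r)) 0 with hml
      have hmA0 : 0 ≤ mA := le_max_right _ _
      have hmP0 : 0 ≤ mP := le_max_left _ _
      have hml0 : 0 ≤ ml := le_max_right _ _
      have hlogsplit : Real.log (1 / (r * Real.sqrt (1 - m ^ 2)))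
          = Real.log (1 / r) + Real.log (1 / Real.sqrt (1 - m ^ 2)) := by
        rw [one_div, one_div, one_div, mul_inv, Real.log_mul (by positivity) (by positivity)]
      have hbndA : mA ≤ max (C1 m t₀ K) 0 + ml := by
        apply max_le _ (by positivity)
        exact add_le_add (le_max_left _ _) (le_max_left _ _)
      have hbndP : mP ≤ max L 0 + Real.log (1 / Real.sqrt (1 - m ^ 2)) + ml := by
        apply max_le (by positivity)
        rw [hlogsplit]
        have h2 := le_max_left L 0
        have h3 := le_max_left (Real.log (1 / r)) 0
        linarith
      have hsum : mA + mP ≤ a₀ + 2 * ml := by rw [ha₀def]; linarith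
      have hXY : ENNReal.ofReal (r * f r * mA) + ENNReal.ofReal (r * f r * mP)
          ≤ ENNReal.ofReal (r * f r) * ENNReal.ofReal (a₀ + 2 * ml) := by
        rw [← ENNReal.ofReal_add (by positivity) (by positivity),
          ← ENNReal.ofReal_mul hrf]
        apply ENNReal.ofReal_le_ofReal
        nlinarith [mul_le_mul_of_nonneg_left hsum hrf]
      calc G r = ENNReal.ofReal (Real.pi / 2) *
            (ENNReal.ofReal (r * f r * mA) * E1 + ENNReal.ofReal (r * f r * mP) * CW1) := rfl
        _ ≤ ENNReal.ofReal (Real.pi / 2) *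
            ((ENNReal.ofReal (r * f r * mA) + ENNReal.ofReal (r * f r * mP)) * (E1 + CW1)) := by
            apply mul_le_mul_right
            calc ENNReal.ofReal (r * f r * mA) * E1 + ENNReal.ofReal (r * f r * mP) * CW1
                ≤ (ENNReal.ofReal (r * f r * mA) + ENNReal.ofReal (r * f r * mP)) * E1
                  + (ENNReal.ofReal (r * f r * mA) + ENNReal.ofReal (r * f r * mP)) * CW1 :=
                  add_le_add (mul_le_mul_left le_self_add _)
                    (mul_le_mul_left le_add_self _)
              _ = _ := by ring
        _ ≤ ENNReal.ofReal (Real.pi / 2) *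
            ((ENNReal.ofReal (r * f r) * ENNReal.ofReal (a₀ + 2 * ml)) * (E1 + CW1)) :=
            mul_le_mul_right (mul_le_mul_left hXY _) _
        _ = _ := by ring
    calc ∫⁻ r in Ioo (0:ℝ) R, G r
        ≤ ∫⁻ r in Ioo (0:ℝ) R, (ENNReal.ofReal (Real.pi / 2) * (E1 + CW1)) *
            (ENNReal.ofReal (r * f r)
              * ENNReal.ofReal (a₀ + 2 * max (Real.log (1 / r)) 0)) :=
          setLIntegral_mono' measurableSet_Ioo hptG
      _ = (ENNReal.ofReal (Real.pi / 2) * (E1 + CW1)) * ∫⁻ r in Ioo (0:ℝ) R,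
            ENNReal.ofReal (r * f r)
              * ENNReal.ofReal (a₀ + 2 * max (Real.log (1 / r)) 0) :=
          lintegral_const_mul' _ _ (by rw [hE1, hCW1]; finiteness)
      _ < ⊤ := ENNReal.mul_lt_top (by rw [hE1, hCW1]; finiteness)
          (fin_master R a₀ 2 f hR ha₀ (by norm_num) hf_cont hf_pos hf_int)
  -- tail via measure continuity
  set μ : Measure ℝ := (volume.restrict (Ioo (0:ℝ) R)).withDensity G with hμdef
  have hμIoo : ∀ b : ℝ, b ≤ R → μ (Ioo 0 b) = ∫⁻ r in Ioo (0:ℝ) b, G r := by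
    intro b hb
    rw [hμdef, withDensity_apply G measurableSet_Ioo,
      Measure.restrict_restrict measurableSet_Ioo,
      inter_eq_left.mpr (Ioo_subset_Ioo le_rfl hb)]
  have hμuniv : μ univ ≠ ⊤ := by
    rw [hμdef, withDensity_apply G MeasurableSet.univ, Measure.restrict_univ]
    exact hGfin.ne
  have htendμ : Tendsto (fun n : ℕ => μ (Ioo (0:ℝ) (1/(n+1)))) atTop (𝓝 0) := by
    have hanti : Antitone (fun n : ℕ => Ioo (0:ℝ) (1/((n:ℝ)+1))) := by
      intro i j hij
      apply Ioo_subset_Ioo le_rfl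
      apply one_div_le_one_div_of_le (by positivity)
      have : (i:ℝ) ≤ (j:ℝ) := Nat.cast_le.mpr hij
      linarith
    have hfin : μ (Ioo (0:ℝ) (1/((0:ℕ)+1))) ≠ ⊤ :=
      ne_top_of_le_ne_top hμuniv (measure_mono (subset_univ _))
    have h1 := tendsto_measure_iInter_atTop
      (μ := μ) (s := fun n : ℕ => Ioo (0:ℝ) (1/((n:ℝ)+1)))
      (fun n => measurableSet_Ioo.nullMeasurableSet) hanti ⟨0, hfin⟩
    have h2 : ⋂ n : ℕ, Ioo (0:ℝ) (1/((n:ℝ)+1)) = ∅ := by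
      ext x
      simp only [mem_iInter, mem_Ioo, mem_empty_iff_false, iff_false]
      intro hx
      obtain ⟨n, hn⟩ := exists_nat_one_div_lt (hx 0).1
      exact absurd (hx n).2 (not_lt.mpr hn.le)
    rw [h2] at h1
    simpa [Function.comp_def] using h1
  rw [ENNReal.tendsto_nhds_zero]
  intro ε hε
  have hε2 : (0:ENNReal) < ε / 2 := ENNReal.div_pos hε.ne' (by norm_num)
  have hε4 : (0:ENNReal) < ε / 2 / 2 := ENNReal.div_pos hε2.ne' (by norm_num)
  obtain ⟨n, hn⟩ := (htendμ.eventually_lt_const hε2).exists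
  set δ := min (1/((n:ℝ)+1)) (min R (Real.exp (-1))) with hδdef
  have hδ0 : 0 < δ := lt_min (by positivity) (lt_min hR (Real.exp_pos _))
  have hδR : δ ≤ R := le_trans (min_le_right _ _) (min_le_left _ _)
  have hδe : δ ≤ Real.exp (-1) := le_trans (min_le_right _ _) (min_le_right _ _)
  have hδ1 : δ ≤ 1 := le_trans hδe (by
    rw [show (1:ℝ) = Real.exp 0 from Real.exp_zero.symm]
    exact Real.exp_le_exp.mpr (by norm_num))
  have hδn : δ ≤ 1/((n:ℝ)+1) := min_le_left _ _
  have htail : ∫⁻ r in Ioo (0:ℝ) δ, G r < ε / 2 := by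
    rw [← hμIoo δ hδR]
    exact lt_of_le_of_lt (measure_mono (Ioo_subset_Ioo le_rfl hδn)) hn
  -- M₂ finiteness
  set M₂ := ∫⁻ r in Ico δ R, ENNReal.ofReal (r * f r) with hM₂def
  have hM₂ : M₂ < ⊤ := by
    have hsub : Ico δ R ⊆ Ioo (0:ℝ) R := fun r hr => ⟨lt_of_lt_of_le hδ0 hr.1, hr.2⟩
    have hle : M₂ ≤ ∫⁻ r in Ioo (0:ℝ) R,
        ENNReal.ofReal (r * f r) * ENNReal.ofReal (1 + 2 * max (Real.log (1/r)) 0) := by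
      rw [hM₂def]
      refine le_trans (lintegral_mono_set hsub) (lintegral_mono (fun r => ?_))
      nth_rewrite 1 [← mul_one (ENNReal.ofReal (r * f r))]
      apply mul_le_mul_right
      rw [show (1:ENNReal) = ENNReal.ofReal 1 from ENNReal.ofReal_one.symm]
      apply ENNReal.ofReal_le_ofReal
      nlinarith [le_max_right (Real.log (1/r)) 0]
    exact lt_of_le_of_lt hle (fin_master R 1 2 f hR (by norm_num) (by norm_num)
      hf_cont hf_pos hf_int)
  have hfinCW2 : ENNReal.ofReal (Real.pi/2) * CW2 * M₂ ≠ ⊤ := by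
    rw [hCW2]
    exact ENNReal.mul_ne_top (ENNReal.mul_ne_top ENNReal.ofReal_ne_top
      ENNReal.ofReal_ne_top) hM₂.ne
  have hfinE1 : ENNReal.ofReal (Real.pi/2) * E1 * M₂ ≠ ⊤ := by
    rw [hE1, hCW1]
    exact ENNReal.mul_ne_top (ENNReal.mul_ne_top ENNReal.ofReal_ne_top
      (ENNReal.add_ne_top.mpr ⟨ENNReal.ofReal_ne_top, ENNReal.ofReal_ne_top⟩)) hM₂.ne
  -- coefficient
  set cδ : ℝ := (max (C1 m t₀ K) 0 + Real.log (1 / δ) + 1)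
      * max 0 (L + Real.log (1 / (δ * Real.sqrt (1 - m ^ 2)))) with hcδdef
  -- per-r small bound
  have hsmall : ∀ (h τ : ℝ), 0 < h → h ≤ 1 → 0 < τ → τ ≤ Real.exp (-1) →
      ∀ r ∈ Ico δ R,
      (∫⁻ w in Ioo (r * Real.sqrt (1 - m ^ 2)) W, ∫⁻ θ in Ioo (0:ℝ) (Real.pi / 2),
        ENNReal.ofReal (if eta m θ ≤ w / ((1 - m ^ 2) * r) then
          r * f r * Real.log (1 + K * Real.sqrt h /
            (w * r * eta m θ / (1 - m ^ 2) - r ^ 2 * eta m θ ^ 2)) * (L - Real.log w)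
        else 0))
      ≤ (ENNReal.ofReal (Real.pi / 2) * (ENNReal.ofReal (K * Real.sqrt h / (δ * τ)) * E1
          + ENNReal.ofReal (cδ * τ ^ ((4:ℝ)⁻¹)) * CW2)) * ENNReal.ofReal (r * f r) := by
    intro h τ hh hh1 hτ0 hτe r hr
    have hr0 : 0 < r := lt_of_lt_of_le hδ0 hr.1
    have hrf : 0 ≤ r * f r := mul_nonneg hr0.le (hf_pos r hr0).le
    have hmeas : Measurable (fun θ : ℝ => (1 - m ^ 2) * (r * eta m θ)) :=
      (continuous_const.mul (continuous_const.mul (continuous_eta m))).measurable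
    have step := inner_le r hγ hr0 hW _
      (K * Real.sqrt h / (δ * τ) * (r * f r))
      (r * f r * (cδ * τ ^ ((4:ℝ)⁻¹)))
      (fun θ => (1 - m ^ 2) * (r * eta m θ))
      (p := -(3/4:ℝ)) (by norm_num) (by norm_num) cos_neg_three_quarter
      (by positivity)
      hmeas
      (fun θ => mul_nonneg hc.le (mul_nonneg hr0.le (by linarith [one_le_eta hm0 hm1 θ])))
      (fun w hw θ =>
        pt2 m t₀ K δ τ f hm0 hm1 ht₀ hK hδ0 hδ1 hτ0 hτe θ hh hh1 hr.1 hr.2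
          (hf_pos r hr0).le hw.1 hw.2)
    refine le_trans step (le_of_eq ?_)
    rw [ENNReal.ofReal_mul (by positivity : (0:ℝ) ≤ K * Real.sqrt h / (δ * τ)),
      ENNReal.ofReal_mul hrf]
    ring
  -- integral over Ico δ R
  have hIco : ∀ (h τ : ℝ), 0 < h → h ≤ 1 → 0 < τ → τ ≤ Real.exp (-1) →
      (∫⁻ r in Ico δ R, ∫⁻ w in Ioo (r * Real.sqrt (1 - m ^ 2)) W,
        ∫⁻ θ in Ioo (0:ℝ) (Real.pi / 2),
        ENNReal.ofReal (if eta m θ ≤ w / ((1 - m ^ 2) * r) then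
          r * f r * Real.log (1 + K * Real.sqrt h /
            (w * r * eta m θ / (1 - m ^ 2) - r ^ 2 * eta m θ ^ 2)) * (L - Real.log w)
        else 0))
      ≤ ENNReal.ofReal (K * Real.sqrt h / (δ * τ)) * (ENNReal.ofReal (Real.pi/2) * E1 * M₂)
        + ENNReal.ofReal (cδ * τ ^ ((4:ℝ)⁻¹)) * (ENNReal.ofReal (Real.pi/2) * CW2 * M₂) := by
    intro h τ hh hh1 hτ0 hτe
    calc (∫⁻ r in Ico δ R, ∫⁻ w in Ioo (r * Real.sqrt (1 - m ^ 2)) W,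
        ∫⁻ θ in Ioo (0:ℝ) (Real.pi / 2),
        ENNReal.ofReal (if eta m θ ≤ w / ((1 - m ^ 2) * r) then
          r * f r * Real.log (1 + K * Real.sqrt h /
            (w * r * eta m θ / (1 - m ^ 2) - r ^ 2 * eta m θ ^ 2)) * (L - Real.log w)
        else 0))
        ≤ ∫⁻ r in Ico δ R, (ENNReal.ofReal (Real.pi / 2)
            * (ENNReal.ofReal (K * Real.sqrt h / (δ * τ)) * E1
              + ENNReal.ofReal (cδ * τ ^ ((4:ℝ)⁻¹)) * CW2)) * ENNReal.ofReal (r * f r) :=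
          setLIntegral_mono' measurableSet_Ico (hsmall h τ hh hh1 hτ0 hτe)
      _ = (ENNReal.ofReal (Real.pi / 2)
            * (ENNReal.ofReal (K * Real.sqrt h / (δ * τ)) * E1
              + ENNReal.ofReal (cδ * τ ^ ((4:ℝ)⁻¹)) * CW2)) * M₂ := by
          rw [hM₂def]
          apply lintegral_const_mul'
          rw [hE1, hCW1, hCW2]
          exact ENNReal.mul_ne_top ENNReal.ofReal_ne_top (ENNReal.add_ne_top.mpr
            ⟨ENNReal.mul_ne_top ENNReal.ofReal_ne_top
              (ENNReal.add_ne_top.mpr ⟨ENNReal.ofReal_ne_top, ENNReal.ofReal_ne_top⟩),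
             ENNReal.mul_ne_top ENNReal.ofReal_ne_top ENNReal.ofReal_ne_top⟩)
      _ = _ := by ring
  -- choose τ
  have hT2tend : Tendsto (fun τ : ℝ => ENNReal.ofReal (cδ * τ ^ ((4:ℝ)⁻¹))
      * (ENNReal.ofReal (Real.pi/2) * CW2 * M₂)) (𝓝[>] (0:ℝ)) (𝓝 0) := by
    have h2 : ContinuousAt (fun τ : ℝ => τ ^ ((4:ℝ)⁻¹)) 0 :=
      Real.continuousAt_rpow_const 0 _ (Or.inr (by norm_num))
    have h3 : Tendsto (fun τ : ℝ => τ ^ ((4:ℝ)⁻¹)) (𝓝 (0:ℝ)) (𝓝 0) := by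
      have h4 := h2.tendsto
      rwa [Real.zero_rpow (by norm_num : ((4:ℝ)⁻¹) ≠ 0)] at h4
    have h5 : Tendsto (fun τ : ℝ => cδ * τ ^ ((4:ℝ)⁻¹)) (𝓝 (0:ℝ)) (𝓝 0) := by
      have h6 := h3.const_mul cδ
      simpa using h6
    have h6 : Tendsto (fun τ : ℝ => ENNReal.ofReal (cδ * τ ^ ((4:ℝ)⁻¹))) (𝓝 (0:ℝ)) (𝓝 0) := by
      have h7 := (ENNReal.continuous_ofReal.tendsto 0).comp h5
      simpa [Function.comp_def] using h7
    have h6' : Tendsto (fun τ : ℝ => ENNReal.ofReal (cδ * τ ^ ((4:ℝ)⁻¹)))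
        (𝓝[>] (0:ℝ)) (𝓝 0) := h6.mono_left nhdsWithin_le_nhds
    have h8 := ENNReal.Tendsto.mul_const h6' (Or.inr hfinCW2)
    simpa using h8
  obtain ⟨τ, hτlt, hτmem⟩ := ((hT2tend.eventually_lt_const hε4).and
    (eventually_of_mem (Ioo_mem_nhdsGT
      (show (0:ℝ) < Real.exp (-1) from Real.exp_pos _))
      (fun x hx => hx))).exists
  -- h-tendsto
  have hT1tend : Tendsto (fun h : ℝ => ENNReal.ofReal (K * Real.sqrt h / (δ * τ))
      * (ENNReal.ofReal (Real.pi/2) * E1 * M₂)) (𝓝[>] (0:ℝ)) (𝓝 0) := by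
    have h1 : Tendsto (fun h : ℝ => K * Real.sqrt h / (δ * τ)) (𝓝 (0:ℝ)) (𝓝 0) := by
      have h2 : Tendsto Real.sqrt (𝓝 0) (𝓝 0) := by
        have h3 := Real.continuous_sqrt.tendsto 0
        rwa [Real.sqrt_zero] at h3
      have h4 := (h2.const_mul K).div_const (δ * τ)
      simpa using h4
    have h3 : Tendsto (fun h : ℝ => ENNReal.ofReal (K * Real.sqrt h / (δ * τ)))
        (𝓝 (0:ℝ)) (𝓝 0) := by
      have h5 := (ENNReal.continuous_ofReal.tendsto 0).comp h1
      simpa [Function.comp_def] using h5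
    have h3' : Tendsto (fun h : ℝ => ENNReal.ofReal (K * Real.sqrt h / (δ * τ)))
        (𝓝[>] (0:ℝ)) (𝓝 0) := h3.mono_left nhdsWithin_le_nhds
    have h4 := ENNReal.Tendsto.mul_const h3' (Or.inr hfinE1)
    simpa using h4
  filter_upwards [Ioo_mem_nhdsGT (show (0:ℝ) < 1 from one_pos),
    hT1tend.eventually_lt_const hε4] with h hh01 hT1
  calc B m t₀ K f h
      = ∫⁻ r in Ioo (0:ℝ) R, ∫⁻ w in Ioo (r * Real.sqrt (1 - m ^ 2)) W,
          ∫⁻ θ in Ioo (0:ℝ) (Real.pi / 2),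
          ENNReal.ofReal (if eta m θ ≤ w / ((1 - m ^ 2) * r) then
            r * f r * Real.log (1 + K * Real.sqrt h /
              (w * r * eta m θ / (1 - m ^ 2) - r ^ 2 * eta m θ ^ 2)) * (L - Real.log w)
          else 0) := rfl
    _ = ∫⁻ r in Ioo (0:ℝ) δ ∪ Ico δ R, ∫⁻ w in Ioo (r * Real.sqrt (1 - m ^ 2)) W,
          ∫⁻ θ in Ioo (0:ℝ) (Real.pi / 2),
          ENNReal.ofReal (if eta m θ ≤ w / ((1 - m ^ 2) * r) then
            r * f r * Real.log (1 + K * Real.sqrt h /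
              (w * r * eta m θ / (1 - m ^ 2) - r ^ 2 * eta m θ ^ 2)) * (L - Real.log w)
          else 0) := by rw [Ioo_union_Ico_eq_Ioo hδ0 hδR]
    _ ≤ (∫⁻ r in Ioo (0:ℝ) δ, ∫⁻ w in Ioo (r * Real.sqrt (1 - m ^ 2)) W,
          ∫⁻ θ in Ioo (0:ℝ) (Real.pi / 2),
          ENNReal.ofReal (if eta m θ ≤ w / ((1 - m ^ 2) * r) then
            r * f r * Real.log (1 + K * Real.sqrt h /
              (w * r * eta m θ / (1 - m ^ 2) - r ^ 2 * eta m θ ^ 2)) * (L - Real.log w)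
          else 0))
        + ∫⁻ r in Ico δ R, ∫⁻ w in Ioo (r * Real.sqrt (1 - m ^ 2)) W,
          ∫⁻ θ in Ioo (0:ℝ) (Real.pi / 2),
          ENNReal.ofReal (if eta m θ ≤ w / ((1 - m ^ 2) * r) then
            r * f r * Real.log (1 + K * Real.sqrt h /
              (w * r * eta m θ / (1 - m ^ 2) - r ^ 2 * eta m θ ^ 2)) * (L - Real.log w)
          else 0) := lintegral_union_le _ _ _
    _ ≤ ε / 2 + (ε / 2 / 2 + ε / 2 / 2) :=
        add_le_add
          (le_trans (setLIntegral_mono' measurableSet_Ioo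
            (fun r hr => hG h hh01.1 hh01.2.le r ⟨hr.1, lt_of_lt_of_le hr.2 hδR⟩)) htail.le)
          (le_trans (hIco h τ hh01.1 hh01.2.le hτmem.1 hτmem.2.le)
            (add_le_add hT1.le hτlt.le))
    _ = ε := by rw [ENNReal.add_halves (ε / 2), ENNReal.add_halves]
end mainsec
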